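/- Theorem 4.3(i). Assume the nonsingularity assumption. Then every probability measure μ* on X such that Pμ* = μ*, and which is an extreme point of the convex set of probability measures ν on X with Pν = ν, is either absolutely continuous with respect to ℓ̄ (μ* ≪ ℓ̄) or mutually singular with ℓ̄ (μ* ⟂ ℓ̄). -/

import Mathlib

open MeasureTheory ENNReal ProbabilityTheory Filter

noncomputable section

/-- The one-step transition probability of the chain of post-jump locations. -/
def Ptrans {Y I' Θ : Type*} [MeasurableSpace Y] [Fintype I'] [MeasurableSpace Θ]
    (ϑ : Measure Θ) (Λ : ℝ)
    (S : I' → ℝ → Y → Y) (w : Θ → Y → Y) (p : Θ → Y → ℝ) (π' : I' → I' → Y → ℝ)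
    (x : Y × I') (A : Set (Y × I')) : ℝ≥0∞ :=
  ∑ j : I', ∫⁻ θ, (∫⁻ t in Set.Ioi (0:ℝ),
      ENNReal.ofReal (Λ * Real.exp (-(Λ*t))) *
      Set.indicator A (fun _ => (1:ℝ≥0∞)) (w θ (S x.2 t x.1), j) *
      ENNReal.ofReal (π' x.2 j (w θ (S x.2 t x.1))) *
      ENNReal.ofReal (p θ (S x.2 t x.1))) ∂ϑ

/-- Auxiliary integrand for `Ptrans`. -/
def itg {Y I' Θ : Type*} [MeasurableSpace Y] [Fintype I'] [MeasurableSpace Θ]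
    (Λ : ℝ) (S : I' → ℝ → Y → Y) (w : Θ → Y → Y) (p : Θ → Y → ℝ) (π' : I' → I' → Y → ℝ)
    (A : Set (Y × I')) (i j : I') (q : (Y × Θ) × ℝ) : ℝ≥0∞ :=
  ENNReal.ofReal (Λ * Real.exp (-(Λ * q.2))) *
  Set.indicator A (fun _ => (1:ℝ≥0∞)) (w q.1.2 (S i q.2 q.1.1), j) *
  ENNReal.ofReal (π' i j (w q.1.2 (S i q.2 q.1.1))) *
  ENNReal.ofReal (p q.1.2 (S i q.2 q.1.1))

lemma Ptrans_eq {Y I' Θ : Type*} [MeasurableSpace Y] [Fintype I'] [MeasurableSpace Θ]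
    (ϑ : Measure Θ) (Λ : ℝ)
    (S : I' → ℝ → Y → Y) (w : Θ → Y → Y) (p : Θ → Y → ℝ) (π' : I' → I' → Y → ℝ)
    (x : Y × I') (A : Set (Y × I')) :
    Ptrans ϑ Λ S w p π' x A
      = ∑ j : I', ∫⁻ θ, (∫⁻ t in Set.Ioi (0:ℝ),
          itg Λ S w p π' A x.2 j ((x.1, θ), t)) ∂ϑ := rfl

set_option maxHeartbeats 1000000 in
/-- **Theorem 4.3(i).** Under the nonsingularity assumption, every ergodic (extreme) invariant
probability measure of the Markov operator `P` of the chain of post-jump locations is either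
absolutely continuous or singular with respect to `ℓ̄ = volume ⊗ count`. -/
theorem thm_4_3_i
    {d N : ℕ} (hd : 0 < d) (hN : 0 < N)
    {Θ : Type*} [MeasurableSpace Θ] (ϑ : Measure Θ) [IsFiniteMeasure ϑ]
    (Λ : ℝ) (hΛ : 0 < Λ)
    (S : Fin N → ℝ → EuclideanSpace ℝ (Fin d) → EuclideanSpace ℝ (Fin d))
    (w : Θ → EuclideanSpace ℝ (Fin d) → EuclideanSpace ℝ (Fin d))
    (p : Θ → EuclideanSpace ℝ (Fin d) → ℝ)
    (π' : Fin N → Fin N → EuclideanSpace ℝ (Fin d) → ℝ)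
    (hS_meas : ∀ i, Measurable (fun q : ℝ × EuclideanSpace ℝ (Fin d) => S i q.1 q.2))
    (hw_meas : Measurable (fun q : Θ × EuclideanSpace ℝ (Fin d) => w q.1 q.2))
    (hp_meas : Measurable (fun q : Θ × EuclideanSpace ℝ (Fin d) => p q.1 q.2))
    (hπ_meas : ∀ i j, Measurable (π' i j))
    (hp_nonneg : ∀ θ y, 0 ≤ p θ y)
    (hp_int : ∀ y, ∫ θ, p θ y ∂ϑ = 1)
    (hπ_nonneg : ∀ i j y, 0 ≤ π' i j y)
    (hπ_sum : ∀ i y, ∑ j, π' i j y = 1)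
    -- nonsingularity assumption
    (hw_ns : ∀ θ, (volume : Measure (EuclideanSpace ℝ (Fin d))).map (w θ) ≪ volume)
    (hS_ns : ∀ i, ∀ t : ℝ, 0 ≤ t →
      (volume : Measure (EuclideanSpace ℝ (Fin d))).map (S i t) ≪ volume)
    -- an ergodic (extreme) invariant probability measure of P
    (μs : Measure (EuclideanSpace ℝ (Fin d) × Fin N)) [IsProbabilityMeasure μs]
    (hinv : ∀ A : Set (EuclideanSpace ℝ (Fin d) × Fin N), MeasurableSet A →
      (∫⁻ x, Ptrans ϑ Λ S w p π' x A ∂μs) = μs A)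
    (hext : ∀ (ν₁ ν₂ : Measure (EuclideanSpace ℝ (Fin d) × Fin N)) (a : ℝ≥0∞),
      IsProbabilityMeasure ν₁ → IsProbabilityMeasure ν₂ →
      (∀ A, MeasurableSet A → (∫⁻ x, Ptrans ϑ Λ S w p π' x A ∂ν₁) = ν₁ A) →
      (∀ A, MeasurableSet A → (∫⁻ x, Ptrans ϑ Λ S w p π' x A ∂ν₂) = ν₂ A) →
      0 < a → a < 1 → μs = a • ν₁ + (1 - a) • ν₂ → ν₁ = ν₂) :
    μs ≪ (volume : Measure (EuclideanSpace ℝ (Fin d))).prod Measure.count ∨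
    μs.MutuallySingular
      ((volume : Measure (EuclideanSpace ℝ (Fin d))).prod Measure.count) := by
  classical
  set ℓ : Measure (EuclideanSpace ℝ (Fin d) × Fin N) :=
    (volume : Measure (EuclideanSpace ℝ (Fin d))).prod Measure.count with hℓdef
  -- basic measurability
  have hSm : ∀ (i : Fin N) (t : ℝ), Measurable (S i t) := fun i t =>
    (hS_meas i).comp (measurable_const.prodMk measurable_id)
  have hwm : ∀ θ, Measurable (w θ) := fun θ =>
    hw_meas.comp (measurable_const.prodMk measurable_id)
  -- joint measurability of the integrand
  have hcore : ∀ (A : Set (EuclideanSpace ℝ (Fin d) × Fin N)), MeasurableSet A →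
      ∀ i j : Fin N, Measurable (itg Λ S w p π' A i j) := by
    intro A hA i j
    have hSq : Measurable fun q : (EuclideanSpace ℝ (Fin d) × Θ) × ℝ => S i q.2 q.1.1 :=
      (hS_meas i).comp (measurable_snd.prodMk (measurable_fst.comp measurable_fst))
    have hwq : Measurable fun q : (EuclideanSpace ℝ (Fin d) × Θ) × ℝ =>
        w q.1.2 (S i q.2 q.1.1) :=
      hw_meas.comp ((measurable_snd.comp measurable_fst).prodMk hSq)
    have hpq : Measurable fun q : (EuclideanSpace ℝ (Fin d) × Θ) × ℝ =>
        p q.1.2 (S i q.2 q.1.1) :=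
      hp_meas.comp ((measurable_snd.comp measurable_fst).prodMk hSq)
    have hc : Measurable fun q : (EuclideanSpace ℝ (Fin d) × Θ) × ℝ =>
        ENNReal.ofReal (Λ * Real.exp (-(Λ * q.2))) :=
      ENNReal.measurable_ofReal.comp
        (measurable_const.mul (Real.measurable_exp.comp (measurable_snd.const_mul Λ).neg))
    have hind : Measurable fun q : (EuclideanSpace ℝ (Fin d) × Θ) × ℝ =>
        Set.indicator A (fun _ => (1:ℝ≥0∞)) (w q.1.2 (S i q.2 q.1.1), j) :=
      (measurable_one.indicator hA).comp (hwq.prodMk measurable_const)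
    exact ((hc.mul hind).mul (ENNReal.measurable_ofReal.comp ((hπ_meas i j).comp hwq))).mul
      (ENNReal.measurable_ofReal.comp hpq)
  -- measurability of the inner double integral
  have hmeasYΘ : ∀ (A : Set (EuclideanSpace ℝ (Fin d) × Fin N)), MeasurableSet A →
      ∀ i j : Fin N, Measurable (fun q : EuclideanSpace ℝ (Fin d) × Θ =>
        ∫⁻ t in Set.Ioi (0:ℝ), itg Λ S w p π' A i j (q, t)) := by
    intro A hA i j
    exact (hcore A hA i j).lintegral_prod_right'
  have hmeasY : ∀ (A : Set (EuclideanSpace ℝ (Fin d) × Fin N)), MeasurableSet A →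
      ∀ i j : Fin N, Measurable (fun y : EuclideanSpace ℝ (Fin d) =>
        ∫⁻ θ, (∫⁻ t in Set.Ioi (0:ℝ), itg Λ S w p π' A i j ((y, θ), t)) ∂ϑ) := by
    intro A hA i j
    exact (hmeasYΘ A hA i j).lintegral_prod_right'
  -- measurability of x ↦ Ptrans x A
  have hPmeas : ∀ (A : Set (EuclideanSpace ℝ (Fin d) × Fin N)), MeasurableSet A →
      Measurable (fun x : EuclideanSpace ℝ (Fin d) × Fin N => Ptrans ϑ Λ S w p π' x A) := by
    intro A hA
    apply measurable_from_prod_countable_left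
    intro i
    simp only [Ptrans_eq]
    exact Finset.measurable_sum _ fun j _ => hmeasY A hA i j
  -- the p-part integrates to 1
  have hp1 : ∀ z : EuclideanSpace ℝ (Fin d), ∫⁻ θ, ENNReal.ofReal (p θ z) ∂ϑ = 1 := by
    intro z
    have hint : Integrable (fun θ => p θ z) ϑ := by
      by_contra h
      have h1 := hp_int z
      rw [integral_undef h] at h1
      exact one_ne_zero h1.symm
    rw [← ofReal_integral_eq_lintegral_ofReal hint (ae_of_all _ fun θ => hp_nonneg θ z),
      hp_int z, ENNReal.ofReal_one]
  -- the exponential density integrates to 1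
  have hexpint : ∫⁻ t in Set.Ioi (0:ℝ), ENNReal.ofReal (Λ * Real.exp (-(Λ * t))) = 1 := by
    have h1 : ∫⁻ t in Set.Ioi (0:ℝ), ENNReal.ofReal (Λ * Real.exp (-(Λ * t)))
        = ∫⁻ t in Set.Ioi (0:ℝ), exponentialPDF Λ t := by
      refine setLIntegral_congr_fun measurableSet_Ioi (fun t ht => ?_)
      rw [exponentialPDF_of_nonneg (le_of_lt ht)]
    have h2 : ∫⁻ t in Set.Ioi (0:ℝ), exponentialPDF Λ t
        = ∫⁻ t in Set.Ici (0:ℝ), exponentialPDF Λ t := setLIntegral_congr Ioi_ae_eq_Ici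
    have h3 : (∫⁻ t in Set.Iio (0:ℝ), exponentialPDF Λ t)
        + ∫⁻ t in Set.Ici (0:ℝ), exponentialPDF Λ t = 1 := by
      have h4 := lintegral_add_compl (μ := (volume : Measure ℝ)) (exponentialPDF Λ)
        (measurableSet_Iio (a := (0:ℝ)))
      rw [Set.compl_Iio] at h4
      rw [h4]
      exact lintegral_exponentialPDF_eq_one hΛ
    rw [lintegral_exponentialPDF_of_nonpos (le_refl (0:ℝ)), zero_add] at h3
    rw [h1, h2, h3]
  -- the transition probability of the whole space is 1
  have hone : ∀ x : EuclideanSpace ℝ (Fin d) × Fin N,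
      Ptrans ϑ Λ S w p π' x Set.univ = 1 := by
    rintro ⟨y, i⟩
    have hmeasθt : ∀ j : Fin N, Measurable (fun q : Θ × ℝ =>
        itg Λ S w p π' Set.univ i j ((y, q.1), q.2)) := fun j =>
      (hcore Set.univ MeasurableSet.univ i j).comp
        ((measurable_const.prodMk measurable_fst).prodMk measurable_snd)
    have hmeasθ : ∀ (t : ℝ) (j : Fin N),
        Measurable (fun θ : Θ => itg Λ S w p π' Set.univ i j ((y, θ), t)) := fun t j =>
      (hcore Set.univ MeasurableSet.univ i j).comp
        ((measurable_const.prodMk measurable_id).prodMk measurable_const)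
    rw [Ptrans_eq]
    calc (∑ j : Fin N, ∫⁻ θ, (∫⁻ t in Set.Ioi (0:ℝ),
          itg Λ S w p π' Set.univ (y, i).2 j (((y, i).1, θ), t)) ∂ϑ)
        = ∑ j : Fin N, ∫⁻ t in Set.Ioi (0:ℝ), (∫⁻ θ,
            itg Λ S w p π' Set.univ i j ((y, θ), t) ∂ϑ) :=
        Finset.sum_congr rfl fun j _ => lintegral_lintegral_swap (hmeasθt j).aemeasurable
      _ = ∫⁻ t in Set.Ioi (0:ℝ), ∑ j : Fin N, (∫⁻ θ,
            itg Λ S w p π' Set.univ i j ((y, θ), t) ∂ϑ) :=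
        (lintegral_finset_sum _ fun j _ => (hmeasθt j).lintegral_prod_left').symm
      _ = ∫⁻ t in Set.Ioi (0:ℝ), ENNReal.ofReal (Λ * Real.exp (-(Λ*t))) := by
        refine lintegral_congr fun t => ?_
        rw [← lintegral_finset_sum _ (fun j _ => hmeasθ t j)]
        have hpt : ∀ θ, (∑ j : Fin N, itg Λ S w p π' Set.univ i j ((y, θ), t))
            = ENNReal.ofReal (Λ * Real.exp (-(Λ*t))) * ENNReal.ofReal (p θ (S i t y)) := by
          intro θ
          have h4 : ∀ j : Fin N, itg Λ S w p π' Set.univ i j ((y, θ), t)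
              = (ENNReal.ofReal (Λ * Real.exp (-(Λ*t))) * ENNReal.ofReal (p θ (S i t y)))
                * ENNReal.ofReal (π' i j (w θ (S i t y))) := by
            intro j
            simp only [itg, Set.indicator_univ]
            ring
          rw [Finset.sum_congr rfl fun j _ => h4 j, ← Finset.mul_sum,
            ← ENNReal.ofReal_sum_of_nonneg (fun j _ => hπ_nonneg i j _), hπ_sum,
            ENNReal.ofReal_one, mul_one]
        have hpm : Measurable (fun θ : Θ => ENNReal.ofReal (p θ (S i t y))) :=
          ENNReal.measurable_ofReal.comp (hp_meas.comp (measurable_id.prodMk measurable_const))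
        rw [lintegral_congr hpt, lintegral_const_mul _ hpm, hp1, mul_one]
      _ = 1 := hexpint
  -- additivity of Ptrans in the set argument
  have hPadd : ∀ (A B : Set (EuclideanSpace ℝ (Fin d) × Fin N)), MeasurableSet A →
      MeasurableSet B → Disjoint A B → ∀ x, Ptrans ϑ Λ S w p π' x (A ∪ B)
        = Ptrans ϑ Λ S w p π' x A + Ptrans ϑ Λ S w p π' x B := by
    intro A B hA hB hAB x
    have hitg : ∀ (j : Fin N) (q : (EuclideanSpace ℝ (Fin d) × Θ) × ℝ),
        itg Λ S w p π' (A ∪ B) x.2 j q = itg Λ S w p π' A x.2 j q + itg Λ S w p π' B x.2 j q := by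
      intro j q
      simp only [itg, Set.indicator_union_of_disjoint hAB]
      ring
    simp only [Ptrans_eq]
    rw [← Finset.sum_add_distrib]
    refine Finset.sum_congr rfl fun j _ => ?_
    have hθA : Measurable fun θ : Θ =>
        ∫⁻ t in Set.Ioi (0:ℝ), itg Λ S w p π' A x.2 j ((x.1, θ), t) :=
      (hmeasYΘ A hA x.2 j).comp (measurable_const.prodMk measurable_id)
    have htA : ∀ θ : Θ, Measurable fun t : ℝ => itg Λ S w p π' A x.2 j ((x.1, θ), t) :=
      fun θ => (hcore A hA x.2 j).comp (measurable_const.prodMk measurable_id)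
    calc (∫⁻ θ, (∫⁻ t in Set.Ioi (0:ℝ), itg Λ S w p π' (A ∪ B) x.2 j ((x.1, θ), t)) ∂ϑ)
        = ∫⁻ θ, ((∫⁻ t in Set.Ioi (0:ℝ), itg Λ S w p π' A x.2 j ((x.1, θ), t))
            + (∫⁻ t in Set.Ioi (0:ℝ), itg Λ S w p π' B x.2 j ((x.1, θ), t))) ∂ϑ := by
          refine lintegral_congr fun θ => ?_
          rw [← lintegral_add_left (htA θ)]
          exact lintegral_congr fun t => hitg j _
      _ = (∫⁻ θ, (∫⁻ t in Set.Ioi (0:ℝ), itg Λ S w p π' A x.2 j ((x.1, θ), t)) ∂ϑ)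
            + ∫⁻ θ, (∫⁻ t in Set.Ioi (0:ℝ), itg Λ S w p π' B x.2 j ((x.1, θ), t)) ∂ϑ :=
          lintegral_add_left hθA _
  -- monotonicity of Ptrans in the set argument
  have hPmono : ∀ (A B : Set (EuclideanSpace ℝ (Fin d) × Fin N)), A ⊆ B →
      ∀ x, Ptrans ϑ Λ S w p π' x A ≤ Ptrans ϑ Λ S w p π' x B := by
    intro A B hsub x
    simp only [Ptrans_eq]
    refine Finset.sum_le_sum fun j _ => lintegral_mono fun θ => lintegral_mono fun t => ?_
    simp only [itg]
    have hind : Set.indicator A (fun _ => (1:ℝ≥0∞)) (w θ (S x.2 t x.1), j)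
        ≤ Set.indicator B (fun _ => (1:ℝ≥0∞)) (w θ (S x.2 t x.1), j) :=
      Set.indicator_le_indicator_of_subset hsub (fun _ => zero_le) _
    exact mul_le_mul' (mul_le_mul' (mul_le_mul' le_rfl hind) le_rfl) le_rfl
  -- the key nonsingularity consequence: P(·, A) vanishes a.e. on null sets
  have hzero : ∀ (A : Set (EuclideanSpace ℝ (Fin d) × Fin N)), MeasurableSet A → ℓ A = 0 →
      ∀ i : Fin N, ∀ᵐ y ∂(volume : Measure (EuclideanSpace ℝ (Fin d))),
        Ptrans ϑ Λ S w p π' (y, i) A = 0 := by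
    intro A hA hA0 i
    have hterm : ∀ j : Fin N, ∀ᵐ y ∂(volume : Measure (EuclideanSpace ℝ (Fin d))),
        (∫⁻ θ, (∫⁻ t in Set.Ioi (0:ℝ), itg Λ S w p π' A i j ((y, θ), t)) ∂ϑ) = 0 := by
      intro j
      set B : Set (EuclideanSpace ℝ (Fin d)) := (fun y => (y, j)) ⁻¹' A with hBdef
      have hBm : MeasurableSet B := (measurable_id.prodMk measurable_const) hA
      have hB0 : (volume : Measure (EuclideanSpace ℝ (Fin d))) B = 0 := by
        have hsub : B ×ˢ ({j} : Set (Fin N)) ⊆ A := by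
          rintro ⟨z, j'⟩ ⟨hz, hj⟩
          rw [Set.mem_singleton_iff] at hj
          subst hj
          exact hz
        have h5 : ℓ (B ×ˢ ({j} : Set (Fin N))) = 0 := measure_mono_null hsub hA0
        rwa [hℓdef, Measure.prod_prod, Measure.count_singleton, mul_one] at h5
      have hint0 : ∫⁻ y, (∫⁻ θ, (∫⁻ t in Set.Ioi (0:ℝ),
          itg Λ S w p π' A i j ((y, θ), t)) ∂ϑ) ∂volume = 0 := by
        rw [lintegral_lintegral_swap (hmeasYΘ A hA i j).aemeasurable]
        have hθ0 : ∀ θ, (∫⁻ y, (∫⁻ t in Set.Ioi (0:ℝ),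
            itg Λ S w p π' A i j ((y, θ), t)) ∂volume) = 0 := by
          intro θ
          have hmyt : Measurable fun q : EuclideanSpace ℝ (Fin d) × ℝ =>
              itg Λ S w p π' A i j ((q.1, θ), q.2) :=
            (hcore A hA i j).comp ((measurable_fst.prodMk measurable_const).prodMk
              measurable_snd)
          rw [lintegral_lintegral_swap hmyt.aemeasurable]
          have hin : ∀ᵐ t ∂(volume : Measure ℝ), t ∈ Set.Ioi (0:ℝ) →
              (∫⁻ y, itg Λ S w p π' A i j ((y, θ), t) ∂volume) = 0 := by
            refine ae_of_all _ fun t ht => ?_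
            have hg : Measurable fun y : EuclideanSpace ℝ (Fin d) => w θ (S i t y) :=
              (hwm θ).comp (hSm i t)
            have hmap : (volume : Measure (EuclideanSpace ℝ (Fin d))).map
                (fun y => w θ (S i t y)) ≪ (volume : Measure (EuclideanSpace ℝ (Fin d))) := by
              have h6 : ((volume : Measure (EuclideanSpace ℝ (Fin d))).map (S i t)).map (w θ)
                  = (volume : Measure (EuclideanSpace ℝ (Fin d))).map
                    (fun y => w θ (S i t y)) := by
                rw [Measure.map_map (hwm θ) (hSm i t)]
                rfl
              rw [← h6]
              exact ((hS_ns i t (le_of_lt ht)).map (hwm θ)).trans (hw_ns θ)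
            have hnull : (volume : Measure (EuclideanSpace ℝ (Fin d)))
                ((fun y => w θ (S i t y)) ⁻¹' B) = 0 := by
              have h7 := hmap hB0
              rwa [Measure.map_apply hg hBm] at h7
            have hae : ∀ᵐ y ∂(volume : Measure (EuclideanSpace ℝ (Fin d))),
                itg Λ S w p π' A i j ((y, θ), t) = 0 := by
              filter_upwards [measure_eq_zero_iff_ae_notMem.mp hnull] with z hz
              have hni : (w θ (S i t z), j) ∉ A := hz
              simp [itg, Set.indicator_of_notMem hni]
            calc (∫⁻ y, itg Λ S w p π' A i j ((y, θ), t) ∂volume)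
                = ∫⁻ _y, (0:ℝ≥0∞) ∂(volume : Measure (EuclideanSpace ℝ (Fin d))) :=
                  lintegral_congr_ae hae
              _ = 0 := lintegral_zero
          rw [setLIntegral_congr_fun_ae measurableSet_Ioi hin, lintegral_zero]
        rw [lintegral_congr hθ0, lintegral_zero]
      have h8 := (lintegral_eq_zero_iff (hmeasY A hA i j)).mp hint0
      filter_upwards [h8] with z hz using hz
    have hall := ae_all_iff.mpr hterm
    filter_upwards [hall] with z hz
    rw [Ptrans_eq]
    exact Finset.sum_eq_zero fun j _ => hz j
  -- lift to the product reference measure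
  have hzeroX : ∀ (A : Set (EuclideanSpace ℝ (Fin d) × Fin N)), MeasurableSet A → ℓ A = 0 →
      ∀ᵐ x ∂ℓ, Ptrans ϑ Λ S w p π' x A = 0 := by
    intro A hA hA0
    have hall : ∀ᵐ y ∂(volume : Measure (EuclideanSpace ℝ (Fin d))),
        ∀ i, Ptrans ϑ Λ S w p π' (y, i) A = 0 := ae_all_iff.mpr (hzero A hA hA0)
    rw [ae_iff] at hall ⊢
    obtain ⟨M, hsubM, hMm, hM0⟩ := exists_measurable_superset_of_null hall
    have hMuniv : ℓ (M ×ˢ (Set.univ : Set (Fin N))) = 0 := by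
      rw [hℓdef, Measure.prod_prod, hM0, zero_mul]
    refine measure_mono_null ?_ hMuniv
    rintro ⟨z, i⟩ hx
    refine ⟨?_, trivial⟩
    by_contra hzM
    have h9 : ∀ i', Ptrans ϑ Λ S w p π' (z, i') A = 0 := by
      by_contra h10
      exact hzM (hsubM h10)
    exact hx (h9 i)
  -- absolutely continuous measures have absolutely continuous image
  have hTzero : ∀ (ν : Measure (EuclideanSpace ℝ (Fin d) × Fin N)), ν ≪ ℓ →
      ∀ A, MeasurableSet A → ℓ A = 0 → (∫⁻ x, Ptrans ϑ Λ S w p π' x A ∂ν) = 0 := by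
    intro ν hν A hA hA0
    have h2 : ∀ᵐ x ∂ν, Ptrans ϑ Λ S w p π' x A = 0 := (hzeroX A hA hA0).filter_mono hν.ae_le
    calc (∫⁻ x, Ptrans ϑ Λ S w p π' x A ∂ν)
        = ∫⁻ _x, (0:ℝ≥0∞) ∂ν := lintegral_congr_ae h2
      _ = 0 := lintegral_zero
  -- Lebesgue decomposition
  set μa : Measure (EuclideanSpace ℝ (Fin d) × Fin N) := ℓ.withDensity (μs.rnDeriv ℓ)
    with hμadef
  set μσ : Measure (EuclideanSpace ℝ (Fin d) × Fin N) := μs.singularPart ℓ with hμσdef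
  haveI : SigmaFinite ℓ := by rw [hℓdef]; infer_instance
  haveI : μs.HaveLebesgueDecomposition ℓ := Measure.haveLebesgueDecomposition_of_sigmaFinite μs ℓ
  have hdecomp : μs = μσ + μa := μs.haveLebesgueDecomposition_add ℓ
  have hac : μa ≪ ℓ := withDensity_absolutelyContinuous ℓ _
  have hsing : μσ.MutuallySingular ℓ := μs.mutuallySingular_singularPart ℓ
  obtain ⟨s, hs, hσs, hℓsc⟩ := hsing
  have hEm : MeasurableSet sᶜ := hs.compl
  have hσEc : μσ sᶜᶜ = 0 := by rwa [compl_compl]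
  have hsum1 : μσ Set.univ + μa Set.univ = 1 := by
    have h := measure_univ (μ := μs)
    rw [hdecomp, Measure.add_apply] at h
    exact h
  have hμσ_fin : ∀ A : Set (EuclideanSpace ℝ (Fin d) × Fin N), μσ A ≠ ⊤ := by
    intro A
    have h1 : μσ A ≤ 1 := by
      calc μσ A ≤ μσ Set.univ := measure_mono (Set.subset_univ _)
        _ ≤ μσ Set.univ + μa Set.univ := le_self_add
        _ = 1 := hsum1
    exact (h1.trans_lt ENNReal.one_lt_top).ne
  have hsplit : ∀ A : Set (EuclideanSpace ℝ (Fin d) × Fin N), MeasurableSet A →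
      (∫⁻ x, Ptrans ϑ Λ S w p π' x A ∂μσ) + (∫⁻ x, Ptrans ϑ Λ S w p π' x A ∂μa) = μs A := by
    intro A hA
    rw [← hinv A hA]
    conv_rhs => rw [hdecomp]
    rw [lintegral_add_measure]
  have htSuniv : (∫⁻ x, Ptrans ϑ Λ S w p π' x Set.univ ∂μσ) = μσ Set.univ := by
    calc (∫⁻ x, Ptrans ϑ Λ S w p π' x Set.univ ∂μσ)
        = ∫⁻ _x, (1:ℝ≥0∞) ∂μσ := lintegral_congr hone
      _ = μσ Set.univ := lintegral_one
  have htSE : (∫⁻ x, Ptrans ϑ Λ S w p π' x sᶜ ∂μσ) = μσ Set.univ := by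
    have h2 := hsplit sᶜ hEm
    rw [hTzero μa hac sᶜ hEm hℓsc, add_zero] at h2
    have h3 : μs sᶜ = μσ Set.univ := by
      rw [hdecomp, Measure.add_apply, hac hℓsc, add_zero]
      have h4 : μσ sᶜ + μσ sᶜᶜ = μσ Set.univ := measure_add_measure_compl hEm
      rw [hσEc, add_zero] at h4
      exact h4
    rw [h2, h3]
  have htSEc : (∫⁻ x, Ptrans ϑ Λ S w p π' x sᶜᶜ ∂μσ) = 0 := by
    have h5 : ∀ x : EuclideanSpace ℝ (Fin d) × Fin N,
        Ptrans ϑ Λ S w p π' x Set.univ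
          = Ptrans ϑ Λ S w p π' x sᶜ + Ptrans ϑ Λ S w p π' x sᶜᶜ := by
      intro x
      rw [← hPadd sᶜ sᶜᶜ hEm hEm.compl disjoint_compl_right, Set.union_compl_self]
    have h6 : μσ Set.univ = (∫⁻ x, Ptrans ϑ Λ S w p π' x sᶜ ∂μσ)
        + ∫⁻ x, Ptrans ϑ Λ S w p π' x sᶜᶜ ∂μσ := by
      rw [← htSuniv, lintegral_congr h5, lintegral_add_left (hPmeas sᶜ hEm)]
    rw [htSE] at h6
    have h8 : μσ Set.univ + 0 = μσ Set.univ + ∫⁻ x, Ptrans ϑ Λ S w p π' x sᶜᶜ ∂μσ := by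
      rw [add_zero]
      exact h6
    exact ((ENNReal.add_right_inj (hμσ_fin Set.univ)).mp h8).symm
  -- invariance of the singular part
  have hμσinv : ∀ A, MeasurableSet A → (∫⁻ x, Ptrans ϑ Λ S w p π' x A ∂μσ) = μσ A := by
    intro A hA
    have hAE : MeasurableSet (A ∩ sᶜ) := hA.inter hEm
    have hADE : MeasurableSet (A \ sᶜ) := hA.diff hEm
    have hdisj : Disjoint (A ∩ sᶜ) (A \ sᶜ) :=
      Set.disjoint_left.mpr fun z hz1 hz2 => hz2.2 hz1.2
    have hcup : (A ∩ sᶜ) ∪ (A \ sᶜ) = A := Set.inter_union_diff A sᶜ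
    have hPx : ∀ x, Ptrans ϑ Λ S w p π' x A
        = Ptrans ϑ Λ S w p π' x (A ∩ sᶜ) + Ptrans ϑ Λ S w p π' x (A \ sᶜ) := by
      intro x
      rw [← hPadd _ _ hAE hADE hdisj, hcup]
    have hdiff0 : (∫⁻ x, Ptrans ϑ Λ S w p π' x (A \ sᶜ) ∂μσ) = 0 := by
      refine le_antisymm ?_ zero_le
      rw [← htSEc]
      exact lintegral_mono fun x => hPmono _ _ (fun z hz => hz.2) x
    have hAE0 : ℓ (A ∩ sᶜ) = 0 := measure_mono_null Set.inter_subset_right hℓsc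
    have hstep : (∫⁻ x, Ptrans ϑ Λ S w p π' x (A ∩ sᶜ) ∂μσ) = μσ (A ∩ sᶜ) := by
      have h2 := hsplit (A ∩ sᶜ) hAE
      rw [hTzero μa hac _ hAE hAE0, add_zero] at h2
      have h3 : μs (A ∩ sᶜ) = μσ (A ∩ sᶜ) := by
        rw [hdecomp, Measure.add_apply, hac hAE0, add_zero]
      rw [h2, h3]
    have hmσA : μσ A = μσ (A ∩ sᶜ) := by
      have h4 := measure_inter_add_diff (μ := μσ) A hEm
      have h5 : μσ (A \ sᶜ) = 0 :=
        measure_mono_null (fun z hz => (hz.2 : z ∈ sᶜᶜ)) hσEc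
      rw [h5, add_zero] at h4
      exact h4.symm
    calc (∫⁻ x, Ptrans ϑ Λ S w p π' x A ∂μσ)
        = ∫⁻ x, (Ptrans ϑ Λ S w p π' x (A ∩ sᶜ)
            + Ptrans ϑ Λ S w p π' x (A \ sᶜ)) ∂μσ := lintegral_congr hPx
      _ = (∫⁻ x, Ptrans ϑ Λ S w p π' x (A ∩ sᶜ) ∂μσ)
            + ∫⁻ x, Ptrans ϑ Λ S w p π' x (A \ sᶜ) ∂μσ :=
          lintegral_add_left (hPmeas _ hAE) _
      _ = μσ (A ∩ sᶜ) := by rw [hdiff0, add_zero, hstep]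
      _ = μσ A := hmσA.symm
  -- invariance of the absolutely continuous part
  have hμainv : ∀ A, MeasurableSet A → (∫⁻ x, Ptrans ϑ Λ S w p π' x A ∂μa) = μa A := by
    intro A hA
    have h2 := hsplit A hA
    rw [hμσinv A hA] at h2
    have h3 : μs A = μσ A + μa A := by rw [hdecomp, Measure.add_apply]
    rw [h3] at h2
    exact (ENNReal.add_right_inj (hμσ_fin A)).mp h2
  -- conclude via extremality
  by_cases hσ0 : μσ = 0
  · left
    have h : μs = μa := by rw [hdecomp, hσ0, zero_add]
    rw [h]
    exact hac
  by_cases ha0 : μa = 0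
  · right
    have h : μs = μσ := by rw [hdecomp, ha0, add_zero]
    rw [h]
    exact ⟨s, hs, hσs, hℓsc⟩
  · exfalso
    have ha_ne : μa Set.univ ≠ 0 := fun h => ha0 (Measure.measure_univ_eq_zero.mp h)
    have hb_ne : μσ Set.univ ≠ 0 := fun h => hσ0 (Measure.measure_univ_eq_zero.mp h)
    have ha_top : μa Set.univ ≠ ⊤ := by
      intro h
      rw [h] at hsum1
      simp at hsum1
    have hb_top : μσ Set.univ ≠ ⊤ := hμσ_fin Set.univ
    have hν₁prob : IsProbabilityMeasure ((μa Set.univ)⁻¹ • μa) := by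
      constructor
      rw [Measure.smul_apply, smul_eq_mul]
      exact ENNReal.inv_mul_cancel ha_ne ha_top
    have hν₂prob : IsProbabilityMeasure ((μσ Set.univ)⁻¹ • μσ) := by
      constructor
      rw [Measure.smul_apply, smul_eq_mul]
      exact ENNReal.inv_mul_cancel hb_ne hb_top
    have hinv₁ : ∀ A, MeasurableSet A →
        (∫⁻ x, Ptrans ϑ Λ S w p π' x A ∂((μa Set.univ)⁻¹ • μa))
          = ((μa Set.univ)⁻¹ • μa) A := by
      intro A hA
      rw [lintegral_smul_measure, hμainv A hA, Measure.smul_apply, smul_eq_mul]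
    have hinv₂ : ∀ A, MeasurableSet A →
        (∫⁻ x, Ptrans ϑ Λ S w p π' x A ∂((μσ Set.univ)⁻¹ • μσ))
          = ((μσ Set.univ)⁻¹ • μσ) A := by
      intro A hA
      rw [lintegral_smul_measure, hμσinv A hA, Measure.smul_apply, smul_eq_mul]
    have ha_lt1 : μa Set.univ < 1 := by
      rw [← hsum1]
      rw [add_comm]
      exact ENNReal.lt_add_right ha_top hb_ne
    have ha_pos : (0:ℝ≥0∞) < μa Set.univ := pos_iff_ne_zero.mpr ha_ne
    have hconv : μs = μa Set.univ • ((μa Set.univ)⁻¹ • μa)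
        + (1 - μa Set.univ) • ((μσ Set.univ)⁻¹ • μσ) := by
      have h1a : (1:ℝ≥0∞) - μa Set.univ = μσ Set.univ := by
        rw [← hsum1, ENNReal.add_sub_cancel_right ha_top]
      rw [h1a]
      have h1 : μa Set.univ • ((μa Set.univ)⁻¹ • μa) = μa := by
        rw [smul_smul, ENNReal.mul_inv_cancel ha_ne ha_top, one_smul]
      have h2 : μσ Set.univ • ((μσ Set.univ)⁻¹ • μσ) = μσ := by
        rw [smul_smul, ENNReal.mul_inv_cancel hb_ne hb_top, one_smul]
      rw [h1, h2, hdecomp]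
      exact add_comm _ _
    have heq := hext ((μa Set.univ)⁻¹ • μa) ((μσ Set.univ)⁻¹ • μσ) (μa Set.univ)
      hν₁prob hν₂prob hinv₁ hinv₂ ha_pos ha_lt1 hconv
    have h1 : ((μa Set.univ)⁻¹ • μa) sᶜ = 0 := by
      rw [Measure.smul_apply, hac hℓsc, smul_zero]
    have h2 : ((μa Set.univ)⁻¹ • μa) s = 0 := by
      rw [heq, Measure.smul_apply, hσs, smul_zero]
    have h3 : ((μa Set.univ)⁻¹ • μa) Set.univ ≤ ((μa Set.univ)⁻¹ • μa) s
        + ((μa Set.univ)⁻¹ • μa) sᶜ := by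
      rw [← Set.union_compl_self s]
      exact measure_union_le _ _
    rw [hν₁prob.measure_univ, h1, h2, add_zero] at h3
    exact absurd h3 (by simp)
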